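/- Let R be a subalgebra of an affine integral domain S over an algebraically closed field, and suppose the set U = {𝔫 ∈ Max S : R_{𝔫∩R} = S_𝔫} is nonempty. Then U contains a nonempty Zariski-open subset of Max S. -/

import Mathlib

/-- The localization of a ring `T` at an ideal `M`, realized as a subset of `K` via
`f : T →+* K`. -/
def locSet {T K : Type*} [CommRing T] [CommRing K] (f : T →+* K) (M : Ideal T) : Set K :=
  {x | ∃ a b : T, b ∉ M ∧ x * f b = f a}

/-- If `U = {𝔫 ∈ Max S | R_{𝔫 ∩ R} = S_𝔫}` is nonempty, then `U` contains a nonempty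
Zariski-open subset of `Max S` (a nonempty basic open set `D(g)` with `g ≠ 0`). -/
theorem stmt_3 {k S : Type*} [Field k] [IsAlgClosed k] [CommRing S] [IsDomain S]
    [Algebra k S] [Algebra.FiniteType k S] (R : Subalgebra k S)
    (U : Set (Ideal S))
    (hU : U = {n | n.IsMaximal ∧
      locSet ((algebraMap S (FractionRing S)).comp R.toSubring.subtype)
          (n.comap R.toSubring.subtype)
        = locSet (algebraMap S (FractionRing S)) n})
    (hne : U.Nonempty) :
    ∃ g : S, g ≠ 0 ∧ (∃ n : Ideal S, n.IsMaximal ∧ g ∉ n) ∧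
      ∀ n : Ideal S, n.IsMaximal → g ∉ n → n ∈ U := by
  classical
  subst hU
  obtain ⟨n₀, hn₀max, hloc⟩ := hne
  set f := algebraMap S (FractionRing S) with hf
  have hinj : Function.Injective f := IsFractionRing.injective S (FractionRing S)
  have one_not : (1 : S) ∉ n₀ := by
    intro h; exact hn₀max.ne_top (Ideal.eq_top_iff_one _ |>.2 h)
  -- every element of S has a denominator in R \ n₀
  have key : ∀ s : S, ∃ b : S, b ∈ R ∧ b ∉ n₀ ∧ s * b ∈ R := by
    intro s
    have hs : f s ∈ locSet f n₀ := ⟨s, 1, one_not, by simp⟩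
    rw [← hloc] at hs
    obtain ⟨a, b, hb, hab⟩ := hs
    refine ⟨b, b.2, ?_, ?_⟩
    · exact hb
    · have h1 : f (s * (b : S)) = f (a : S) := by
        rw [map_mul]; exact hab
      have := hinj h1
      rw [this]; exact a.2
  obtain ⟨t, ht⟩ := ‹Algebra.FiniteType k S›.out
  choose b hbR hbn hbmul using fun s : S => key s
  set g : S := ∏ x ∈ t, b x with hg
  have hgR : g ∈ R := Subalgebra.prod_mem R fun x _ => hbR x
  have hgn : g ∉ n₀ := by
    refine Finset.prod_induction _ (fun s => s ∉ n₀) ?_ one_not (fun x _ => hbn x)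
    intro x y hx hy hxy
    rcases (hn₀max.isPrime.mem_or_mem hxy) with h | h
    · exact hx h
    · exact hy h
  have hxg : ∀ x ∈ t, x * g ∈ R := by
    intro x hx
    have : g = b x * ∏ y ∈ t.erase x, b y := (Finset.mul_prod_erase t b hx).symm
    rw [this, ← mul_assoc]
    exact Subalgebra.mul_mem R (hbmul x) (Subalgebra.prod_mem R fun y _ => hbR y)
  -- every element of S times a power of g lands in R
  have main : ∀ s : S, ∃ j : ℕ, s * g ^ j ∈ R := by
    have hT : ∀ s : S, s ∈ Algebra.adjoin k (t : Set S) → ∃ j : ℕ, s * g ^ j ∈ R := by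
      intro s hs
      induction hs using Algebra.adjoin_induction with
      | mem x hx => exact ⟨1, by simpa using hxg x hx⟩
      | algebraMap c => exact ⟨0, by simpa using R.algebraMap_mem c⟩
      | add x y _ _ hx hy =>
          obtain ⟨j₁, h₁⟩ := hx; obtain ⟨j₂, h₂⟩ := hy
          refine ⟨j₁ + j₂, ?_⟩
          have : (x + y) * g ^ (j₁ + j₂) =
              (x * g ^ j₁) * g ^ j₂ + (y * g ^ j₂) * g ^ j₁ := by ring
          rw [this]
          exact R.add_mem (R.mul_mem h₁ (R.pow_mem hgR j₂))
            (R.mul_mem h₂ (R.pow_mem hgR j₁))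
      | mul x y _ _ hx hy =>
          obtain ⟨j₁, h₁⟩ := hx; obtain ⟨j₂, h₂⟩ := hy
          refine ⟨j₁ + j₂, ?_⟩
          have : (x * y) * g ^ (j₁ + j₂) = (x * g ^ j₁) * (y * g ^ j₂) := by ring
          rw [this]; exact R.mul_mem h₁ h₂
    intro s
    exact hT s (ht ▸ Algebra.mem_top)
  refine ⟨g, ?_, ⟨n₀, hn₀max, hgn⟩, ?_⟩
  · intro h; exact hgn (h ▸ n₀.zero_mem)
  intro n hnmax hgnn
  refine ⟨hnmax, ?_⟩
  ext x
  constructor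
  · rintro ⟨a, c, hc, hac⟩
    exact ⟨(a : S), (c : S), by exact hc, hac⟩
  · rintro ⟨a, c, hc, hac⟩
    obtain ⟨j₁, h₁⟩ := main a
    obtain ⟨j₂, h₂⟩ := main c
    have haR : a * g ^ (j₁ + j₂) ∈ R := by
      have : a * g ^ (j₁ + j₂) = (a * g ^ j₁) * g ^ j₂ := by ring
      rw [this]; exact R.mul_mem h₁ (R.pow_mem hgR j₂)
    have hcR : c * g ^ (j₁ + j₂) ∈ R := by
      have : c * g ^ (j₁ + j₂) = (c * g ^ j₂) * g ^ j₁ := by ring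
      rw [this]; exact R.mul_mem h₂ (R.pow_mem hgR j₁)
    have hcn : c * g ^ (j₁ + j₂) ∉ n := by
      intro h
      rcases hnmax.isPrime.mem_or_mem h with h' | h'
      · exact hc h'
      · exact hgnn (hnmax.isPrime.mem_of_pow_mem _ h')
    refine ⟨⟨a * g ^ (j₁ + j₂), haR⟩, ⟨c * g ^ (j₁ + j₂), hcR⟩,
      by exact hcn, ?_⟩
    show x * f (c * g ^ (j₁ + j₂)) = f (a * g ^ (j₁ + j₂))
    rw [map_mul, map_mul, ← mul_assoc, hac]
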